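/- Let G be a finite abelian group. For generating symbols (H, Y, β)' and (H', Y', β')' of BC'_*(G), define their product by (H, Y, β)' ×̃ (H', Y', β')' = Ψ(Φ((H, Y, β)') × Φ((H', Y', β')')), where × is the product on BC_*(G) given on symbols by (H₁, Y₁, β₁) × (H₂, Y₂, β₂) = (H₁ ∩ H₂, Y₁ ∩ Y₂, (β₁ ∪ β₂)|_{H₁ ∩ H₂}). Then (H, Y, β)' ×̃ (H', Y', β')' = 0 if H ≠ H', and equals (H, Y ∩ Y', β ∪ β')' if H = H'. -/

import Mathlib

open scoped Classical

noncomputable section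

namespace CBG

/-- The character group `A^∨ = Hom(A, ℂ^×)` of a group `A`, written additively. -/
abbrev Ch (A : Type*) [Group A] : Type _ := Additive (A →* ℂˣ)

/-- A multiset of characters generates the character group. -/
def gens {A : Type*} [Group A] (β : Multiset (Ch A)) : Prop :=
  AddSubgroup.closure {b | b ∈ β} = ⊤

variable (G : Type*) [Group G]

/-- Generating symbols `(H, Y, β)` of the combinatorial symbols group `SC_n(G)`:
`H ⊆ G` abelian, `H ⊆ Y ⊆ Z_G(H)`, and `β` a multiset (= sequence modulo the
reordering relation (O)) of nontrivial characters of `H`, of length `1 ≤ r ≤ n`,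
generating `H^∨`. -/
structure Symbol (n : ℕ) where
  H : Subgroup G
  Y : Subgroup G
  habelian : IsMulCommutative H
  hHY : H ≤ Y
  hYC : Y ≤ Subgroup.centralizer (H : Set G)
  β : Multiset (Ch H)
  hcard₁ : 1 ≤ Multiset.card β
  hcard₂ : Multiset.card β ≤ n
  hne : ∀ b ∈ β, b ≠ 0
  hgen : gens β

/-- The combinatorial symbols group `SC_n(G)`: the free `ℤ`-module on the symbols. -/
abbrev SC (n : ℕ) : Type _ := Symbol G n →₀ ℤ

/-- The symbol `(H, Y, β)` as an element of `SC_n(G)`, with the convention that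
an invalid symbol (in particular, one whose character sequence contains the
trivial character) is `0`. -/
def mkSC (n : ℕ) (H Y : Subgroup G) (β : Multiset (Ch H)) : SC G n :=
  if h : IsMulCommutative H ∧ H ≤ Y ∧ Y ≤ Subgroup.centralizer (H : Set G) ∧
      1 ≤ Multiset.card β ∧ Multiset.card β ≤ n ∧ (∀ b ∈ β, b ≠ 0) ∧ gens β then
    Finsupp.single ⟨H, Y, h.1, h.2.1, h.2.2.1, β, h.2.2.2.1, h.2.2.2.2.1,
      h.2.2.2.2.2.1, h.2.2.2.2.2.2⟩ 1
  else 0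

/-- Restriction of a character to a smaller subgroup. -/
def resCh {H K : Subgroup G} (h : K ≤ H) (b : Ch H) : Ch K :=
  Additive.ofMul ((Additive.toMul b).comp (Subgroup.inclusion h))

/-- The conjugate subgroup `gHg⁻¹`. -/
def conjSub (g : G) (H : Subgroup G) : Subgroup G :=
  Subgroup.map (MulAut.conj g : G ≃* G) H

/-- Transport of a character of `H` to a character of `K = gHg⁻¹` along conjugation by `g`. -/
def conjChTo {H K : Subgroup G} (g : G) (hK : conjSub G g H = K) (b : Ch H) : Ch K :=
  Additive.ofMul ((Additive.toMul b).comp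
    (((MulEquiv.subgroupMap (MulAut.conj g : G ≃* G) H).trans
      (MulEquiv.subgroupCongr hK)).symm.toMonoidHom))

/-- Relation (C): conjugation. -/
def relC (n : ℕ) : Set (SC G n) :=
  {x | ∃ (s : Symbol G n) (g : G),
    x = Finsupp.single s 1 -
        mkSC G n (conjSub G g s.H) (conjSub G g s.Y) (s.β.map (conjChTo G g rfl))}

/-- Relation (V): vanishing. -/
def relV (n : ℕ) : Set (SC G n) :=
  {x | ∃ s : Symbol G n,
    (s.H = ⊥ ∨ ∃ (b₁ b₂ : Ch s.H) (rest : Multiset (Ch s.H)),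
      s.β = b₁ ::ₘ b₂ ::ₘ rest ∧ b₁ + b₂ = 0) ∧
    x = Finsupp.single s 1}

/-- Relation (B2): blowup. -/
def relB2 (n : ℕ) : Set (SC G n) :=
  {x | ∃ (s : Symbol G n) (b₁ b₂ : Ch s.H) (rest : Multiset (Ch s.H)),
    s.β = b₁ ::ₘ b₂ ::ₘ rest ∧
    ((b₁ = b₂ ∧ x = Finsupp.single s 1 - mkSC G n s.H s.Y (b₂ ::ₘ rest)) ∨
     (b₁ ≠ b₂ ∧ (∃ b ∈ s.β, b ∈ AddSubgroup.zmultiples (b₁ - b₂)) ∧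
        x = Finsupp.single s 1 - mkSC G n s.H s.Y ((b₁ - b₂) ::ₘ b₂ ::ₘ rest)
            - mkSC G n s.H s.Y (b₁ ::ₘ (b₂ - b₁) ::ₘ rest)) ∨
     (b₁ ≠ b₂ ∧ ¬(∃ b ∈ s.β, b ∈ AddSubgroup.zmultiples (b₁ - b₂)) ∧
        x = Finsupp.single s 1 - mkSC G n s.H s.Y ((b₁ - b₂) ::ₘ b₂ ::ₘ rest)
            - mkSC G n s.H s.Y (b₁ ::ₘ (b₂ - b₁) ::ₘ rest)
            - mkSC G n (Subgroup.map s.H.subtype (MonoidHom.ker (Additive.toMul (b₁ - b₂))))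
                s.Y (s.β.map (resCh G (Subgroup.map_subtype_le _)))))}

/-- Relation (B2'): modified blowup. -/
def relB2' (n : ℕ) : Set (SC G n) :=
  {x | ∃ (s : Symbol G n) (b₁ b₂ : Ch s.H) (rest : Multiset (Ch s.H)),
    s.β = b₁ ::ₘ b₂ ::ₘ rest ∧
    ((b₁ = b₂ ∧ x = Finsupp.single s 1 - mkSC G n s.H s.Y (b₂ ::ₘ rest)) ∨
     (b₁ ≠ b₂ ∧
        x = Finsupp.single s 1 - mkSC G n s.H s.Y ((b₁ - b₂) ::ₘ b₂ ::ₘ rest)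
            - mkSC G n s.H s.Y (b₁ ::ₘ (b₂ - b₁) ::ₘ rest)))}

/-- The combinatorial Burnside group `BC_n(G)`. -/
abbrev BC (n : ℕ) : Type _ :=
  SC G n ⧸ Submodule.span ℤ (relC G n ∪ relV G n ∪ relB2 G n)

/-- The group `BC'_n(G)`. -/
abbrev BC' (n : ℕ) : Type _ :=
  SC G n ⧸ Submodule.span ℤ (relC G n ∪ relV G n ∪ relB2' G n)

/-- Projection `SC_n(G) → BC_n(G)`. -/
def BCmk (n : ℕ) : SC G n →ₗ[ℤ] BC G n :=
  Submodule.mkQ _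

/-- Projection `SC_n(G) → BC'_n(G)`. -/
def BC'mk (n : ℕ) : SC G n →ₗ[ℤ] BC' G n :=
  Submodule.mkQ _

/-- Generators of the symbols group `S_n(A)` of a (finite abelian) group `A`:
`n`-tuples (modulo reordering, i.e. multisets of size `n`) of characters of `A`
generating `A^∨`. -/
def BGen (A : Type*) [Group A] (n : ℕ) : Type _ :=
  {β : Multiset (Ch A) // Multiset.card β = n ∧ gens β}

/-- The symbols group `S_n(A)`. -/
abbrev SB (A : Type*) [Group A] (n : ℕ) : Type _ := BGen A n →₀ ℤ

/-- A tuple of characters as an element of `S_n(A)` (zero if not a valid generator). -/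
def mkSB (A : Type*) [Group A] (n : ℕ) (β : Multiset (Ch A)) : SB A n :=
  if h : Multiset.card β = n ∧ gens β then Finsupp.single ⟨β, h⟩ 1 else 0

/-- The blowup relation (B). -/
def relB (A : Type*) [Group A] (n : ℕ) : Set (SB A n) :=
  {x | ∃ (β : BGen A n) (b₁ b₂ : Ch A) (rest : Multiset (Ch A)),
    β.1 = b₁ ::ₘ b₂ ::ₘ rest ∧
    x = Finsupp.single β 1 - mkSB A n ((b₁ - b₂) ::ₘ b₂ ::ₘ rest)
        - mkSB A n (b₁ ::ₘ (b₂ - b₁) ::ₘ rest)}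

/-- The group `B_n(A)`: quotient of `S_n(A)` by the blowup relation (B). -/
abbrev Bgrp (A : Type*) [Group A] (n : ℕ) : Type _ :=
  SB A n ⧸ Submodule.span ℤ (relB A n)

variable (G : Type*) [Group G]

/-- Conjugation by an element of the normalizer of `H`, as a homomorphism `H →* H`. -/
def normConj (H : Subgroup G) (g : G) (hg : g ∈ Subgroup.normalizer (H : Set G)) : H →* H where
  toFun x := ⟨g * x * g⁻¹, (Subgroup.mem_normalizer_iff.mp hg x).1 x.2⟩
  map_one' := by ext; simp
  map_mul' x y := by
    ext
    push_cast
    group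

/-- The conjugation action of an element of the normalizer of `H` on characters of `H`. -/
def chConjN (H : Subgroup G) (g : G) (hg : g ∈ Subgroup.normalizer (H : Set G)) (b : Ch H) : Ch H :=
  Additive.ofMul ((Additive.toMul b).comp (normConj G H g hg))

/-- The relation `(C_{(H,Y)})`: `β = β^g` for all `g ∈ N_G(H) ∩ N_G(Y)`. -/
def relCHY (H Y : Subgroup G) (n : ℕ) : Set (SB H n) :=
  {x | ∃ (β : BGen H n) (g : G) (hg : g ∈ Subgroup.normalizer (H : Set G)) (_ : g ∈ Subgroup.normalizer (Y : Set G)),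
    x = Finsupp.single β 1 - mkSB H n (β.1.map (chConjN G H g hg))}

/-- The group `B_n(H)/(C_{(H,Y)})`. -/
abbrev BnC (H Y : Subgroup G) (n : ℕ) : Type _ :=
  SB H n ⧸ Submodule.span ℤ (relB H n ∪ relCHY G H Y n)


end CBG

namespace CBG

variable (G : Type*) [Group G]

/-- The restriction of a symbol `s = (H, Y, β)` to a subgroup `K ⊆ H`, as an element
of `SC_n(G)` (a symbol whose character sequence contains the trivial character being
zero, and `0` if `K ⊄ H`). -/
def resSC (n : ℕ) (s : Symbol G n) (K : Subgroup G) : SC G n :=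
  if h : K ≤ s.H then mkSC G n K s.Y (s.β.map (resCh G h)) else 0

/-- Transport of characters along an equality of subgroups. -/
def castCh {H K : Subgroup G} (h : H = K) (b : Ch H) : Ch K :=
  Additive.ofMul ((Additive.toMul b).comp (MulEquiv.subgroupCongr h).symm.toMonoidHom)

end CBG

open CBG

section CBGAux

open CBG

open scoped Classical

noncomputable instance : RootableBy ℂˣ ℕ :=
  rootableByOfPowLeftSurj _ _ (fun {n} hn x => by
    obtain ⟨z, hz⟩ := IsAlgClosed.exists_pow_nat_eq (x : ℂ) (Nat.pos_of_ne_zero hn)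
    have hz0 : z ≠ 0 := by
      intro h
      rw [h, zero_pow hn] at hz
      exact x.ne_zero hz.symm
    refine ⟨Units.mk0 z hz0, Units.ext ?_⟩
    push_cast
    exact hz)

noncomputable instance : RootableBy ℂˣ ℤ := Group.rootableByIntOfRootableByNat ℂˣ

noncomputable instance : DivisibleBy (Additive ℂˣ) ℤ where
  div a n := Additive.ofMul (RootableBy.root a.toMul n)
  div_zero a := congrArg Additive.ofMul (RootableBy.root_zero a.toMul)
  div_cancel {n} a hn := by
    show (n : ℤ) • Additive.ofMul (RootableBy.root a.toMul n) = a
    rw [← ofMul_zpow]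
    exact congrArg Additive.ofMul (RootableBy.root_cancel a.toMul hn)

namespace CBGAux

variable {G : Type*} [CommGroup G]

lemma Ch_ext {H : Subgroup G} {b b' : Ch H}
    (h : ∀ x, Additive.toMul b x = Additive.toMul b' x) : b = b' :=
  Additive.toMul.injective (MonoidHom.ext h)

lemma resCh_resCh {H K L : Subgroup G} (h1 : K ≤ H) (h2 : L ≤ K) (b : Ch H) :
    resCh G h2 (resCh G h1 b) = resCh G (h2.trans h1) b :=
  Ch_ext fun _ => rfl

lemma resCh_comp {H K L : Subgroup G} (h1 : K ≤ H) (h2 : L ≤ K) :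
    (resCh G h2) ∘ (resCh G h1) = resCh G (h2.trans h1) :=
  funext fun b => resCh_resCh h1 h2 b

lemma resCh_zero {H K : Subgroup G} (h : K ≤ H) : resCh G h (0 : Ch H) = 0 :=
  Ch_ext fun _ => rfl

lemma resCh_self {H : Subgroup G} (h : H ≤ H) (b : Ch H) : resCh G h b = b :=
  Ch_ext fun _ => rfl

lemma resCh_eq_castCh {H K : Subgroup G} (e : K = H) (h : H ≤ K) (b : Ch K) :
    resCh G h b = castCh G e b :=
  Ch_ext fun _ => rfl

/-- Restriction of characters as an additive homomorphism. -/
def resChHom {H K : Subgroup G} (h : K ≤ H) : Ch H →+ Ch K where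
  toFun := resCh G h
  map_zero' := resCh_zero h
  map_add' _ _ := Ch_ext fun _ => rfl

lemma resCh_surjective {H K : Subgroup G} (h : K ≤ H) :
    Function.Surjective (resCh G h) := by
  intro b
  obtain ⟨F, hF⟩ := (Module.Baer.of_divisible (Additive ℂˣ)).extension_property_addMonoidHom
    (MonoidHom.toAdditive (Subgroup.inclusion h))
    (Subgroup.inclusion_injective h)
    (MonoidHom.toAdditive (Additive.toMul b))
  refine ⟨Additive.ofMul (MonoidHom.toAdditive.symm F), ?_⟩
  apply Ch_ext
  intro x
  exact congrArg Additive.toMul (DFunLike.congr_fun hF (Additive.ofMul x))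

lemma gens_map {H K : Subgroup G} (h : K ≤ H) {β : Multiset (Ch H)} (hβ : gens β) :
    gens (β.map (resCh G h)) := by
  unfold gens at hβ ⊢
  rw [eq_top_iff]
  rintro c -
  obtain ⟨b, rfl⟩ := resCh_surjective h c
  have hb : b ∈ AddSubgroup.closure {b | b ∈ β} := by rw [hβ]; trivial
  refine AddSubgroup.closure_induction
    (p := fun b _ => resCh G h b ∈ AddSubgroup.closure {c | c ∈ β.map (resCh G h)})
    ?_ ?_ ?_ ?_ hb
  · intro x hx
    exact AddSubgroup.subset_closure (Multiset.mem_map.mpr ⟨x, hx, rfl⟩)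
  · show resCh G h 0 ∈ _
    rw [resCh_zero]
    exact zero_mem _
  · intro x y hx hy px py
    show resCh G h (x + y) ∈ _
    have hadd : resCh G h (x + y) = resCh G h x + resCh G h y := (resChHom h).map_add x y
    rw [hadd]
    exact add_mem px py
  · intro x hx px
    show resCh G h (-x) ∈ _
    have hneg : resCh G h (-x) = -(resCh G h x) := map_neg (resChHom h) x
    rw [hneg]
    exact neg_mem px

lemma gens_add_left {H : Subgroup G} {β β' : Multiset (Ch H)} (hβ : gens β) :
    gens (β + β') := by
  unfold gens at hβ ⊢
  rw [eq_top_iff, ← hβ]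
  exact AddSubgroup.closure_mono (fun b hb => Multiset.mem_add.mpr (Or.inl hb))

lemma le_cent (H Y : Subgroup G) : Y ≤ Subgroup.centralizer (H : Set G) :=
  fun y _ => Subgroup.mem_centralizer_iff.mpr fun h _ => mul_comm h y

lemma mkSC_eq_single {m : ℕ} (H Y : Subgroup G) (β : Multiset (Ch H)) (hHY : H ≤ Y)
    (h1 : 1 ≤ Multiset.card β) (h2 : Multiset.card β ≤ m)
    (hne : ∀ b ∈ β, b ≠ 0) (hg : gens β) :
    mkSC G m H Y β =
      Finsupp.single ⟨H, Y, inferInstance, hHY, le_cent H Y, β, h1, h2, hne, hg⟩ 1 := by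
  rw [mkSC, dif_pos ⟨inferInstance, hHY, le_cent H Y, h1, h2, hne, hg⟩]

lemma mkSC_eq_zero {m : ℕ} (H Y : Subgroup G) (β : Multiset (Ch H))
    (h0 : (0 : Ch H) ∈ β) : mkSC G m H Y β = 0 := by
  rw [mkSC, dif_neg]
  intro hc
  exact hc.2.2.2.2.2.1 0 h0 rfl

lemma moebius_colsum [Fintype (Subgroup G)]
    (μ : Subgroup G → Subgroup G → ℤ)
    (hμ_self : ∀ H : Subgroup G, μ H H = 1)
    (hμ_not_le : ∀ H K : Subgroup G, ¬ H ≤ K → μ H K = 0)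
    (hμ_rec : ∀ H K : Subgroup G, H < K →
      μ H K = -∑ Z ∈ Finset.univ.filter (fun Z : Subgroup G => H ≤ Z ∧ Z < K), μ H Z)
    (L H : Subgroup G) :
    ∑ K ∈ Finset.univ.filter (fun K : Subgroup G => K ≤ H ∧ L ≤ K), μ K H
      = if L = H then 1 else 0 := by
  classical
  set M : Matrix (Subgroup G) (Subgroup G) ℤ := Matrix.of μ with hM
  set Z : Matrix (Subgroup G) (Subgroup G) ℤ :=
    Matrix.of (fun A B => if A ≤ B then (1 : ℤ) else 0) with hZ
  have hMZ : M * Z = 1 := by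
    ext A B
    rw [Matrix.mul_apply, Matrix.one_apply]
    have e1 : ∀ K : Subgroup G, M A K * Z K B =
        if A ≤ K ∧ K ≤ B then μ A K else 0 := by
      intro K
      simp only [hM, hZ, Matrix.of_apply]
      by_cases h1 : A ≤ K
      · by_cases h2 : K ≤ B <;> simp [h1, h2]
      · simp [h1, hμ_not_le A K h1]
    rw [Finset.sum_congr rfl fun K _ => e1 K, ← Finset.sum_filter]
    by_cases hAB : A ≤ B
    · rcases eq_or_lt_of_le hAB with hE | hlt
      · subst hE
        rw [if_pos rfl]
        rw [Finset.sum_eq_single_of_mem A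
          (Finset.mem_filter.mpr ⟨Finset.mem_univ _, le_refl A, le_refl A⟩)]
        · exact hμ_self A
        · intro K hK hKA
          rcases Finset.mem_filter.mp hK with ⟨-, h1, h2⟩
          exact absurd (le_antisymm h2 h1) hKA
      · rw [if_neg (ne_of_lt hlt)]
        have hsplit : Finset.univ.filter (fun K : Subgroup G => A ≤ K ∧ K ≤ B) =
            insert B (Finset.univ.filter (fun K : Subgroup G => A ≤ K ∧ K < B)) := by
          ext K
          simp only [Finset.mem_filter, Finset.mem_insert, Finset.mem_univ, true_and]
          constructor
          · rintro ⟨h1, h2⟩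
            rcases lt_or_eq_of_le h2 with h3 | h3
            · exact Or.inr ⟨h1, h3⟩
            · exact Or.inl h3
          · rintro (rfl | ⟨h1, h2⟩)
            · exact ⟨le_of_lt hlt, le_refl _⟩
            · exact ⟨h1, le_of_lt h2⟩
        rw [hsplit, Finset.sum_insert (by simp)]
        rw [hμ_rec A B hlt]
        ring
    · rw [if_neg (fun h => hAB (le_of_eq h))]
      apply Finset.sum_eq_zero
      intro K hK
      rcases Finset.mem_filter.mp hK with ⟨-, h1, h2⟩
      exact absurd (h1.trans h2) hAB
  have hZM : Z * M = 1 := mul_eq_one_comm.mp hMZ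
  have := congrFun (congrFun hZM L) H
  rw [Matrix.mul_apply, Matrix.one_apply] at this
  rw [← this]
  have e2 : ∀ K : Subgroup G, Z L K * M K H =
      if K ≤ H ∧ L ≤ K then μ K H else 0 := by
    intro K
    simp only [hM, hZ, Matrix.of_apply]
    by_cases h1 : L ≤ K
    · by_cases h2 : K ≤ H
      · simp [h1, h2]
      · simp [h1, h2, hμ_not_le K H h2]
    · simp [h1]
  rw [Finset.sum_congr rfl fun K _ => e2 K, ← Finset.sum_filter]

end CBGAux

end CBGAux

open scoped Classical in
/-- Let `G` be a finite abelian group.  For generating symbols `(H,Y,β)'`, `(H',Y',β')'`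
define `(H,Y,β)' ×̃ (H',Y',β')' = Ψ(Φ((H,Y,β)') × Φ((H',Y',β')'))`, where `×` is the
product on `BC_*(G)` given on symbols by
`(H₁,Y₁,β₁) × (H₂,Y₂,β₂) = (H₁ ∩ H₂, Y₁ ∩ Y₂, (β₁ ∪ β₂)|_{H₁ ∩ H₂})` and `Ψ`, `Φ` are
the mutually inverse maps of Moebius inversion.  Then, in `BC'_{n+n'}(G)`, the product
`(H,Y,β)' ×̃ (H',Y',β')'` is `0` if `H ≠ H'`, and equals `(H, Y ∩ Y', β ∪ β')'` if
`H = H'`. -/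
theorem BC'_product_formula
    (G : Type*) [CommGroup G] [Fintype G] [Fintype (Subgroup G)]
    (n n' : ℕ) (hn : 1 ≤ n) (hn' : 1 ≤ n')
    (μ : Subgroup G → Subgroup G → ℤ)
    (hμ_self : ∀ H : Subgroup G, μ H H = 1)
    (hμ_not_le : ∀ H K : Subgroup G, ¬ H ≤ K → μ H K = 0)
    (hμ_rec : ∀ H K : Subgroup G, H < K →
      μ H K = -∑ Z ∈ Finset.univ.filter (fun Z : Subgroup G => H ≤ Z ∧ Z < K), μ H Z)
    (Φ₁ : SC G n →ₗ[ℤ] SC G n) (Φ₂ : SC G n' →ₗ[ℤ] SC G n')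
    (Ψ : SC G (n + n') →ₗ[ℤ] SC G (n + n'))
    (hΦ₁ : ∀ s : Symbol G n, Φ₁ (Finsupp.single s 1) =
      ∑ K ∈ Finset.univ.filter (fun K : Subgroup G => K ≤ s.H), μ K s.H • resSC G n s K)
    (hΦ₂ : ∀ s : Symbol G n', Φ₂ (Finsupp.single s 1) =
      ∑ K ∈ Finset.univ.filter (fun K : Subgroup G => K ≤ s.H), μ K s.H • resSC G n' s K)
    (hΨ : ∀ s : Symbol G (n + n'), Ψ (Finsupp.single s 1) =
      ∑ K ∈ Finset.univ.filter (fun K : Subgroup G => K ≤ s.H), resSC G (n + n') s K)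
    (P : SC G n →ₗ[ℤ] SC G n' →ₗ[ℤ] SC G (n + n'))
    (hP : ∀ (s : Symbol G n) (s' : Symbol G n'),
      P (Finsupp.single s 1) (Finsupp.single s' 1) =
        mkSC G (n + n') (s.H ⊓ s'.H) (s.Y ⊓ s'.Y)
          (s.β.map (resCh G inf_le_left) + s'.β.map (resCh G inf_le_right))) :
    ∀ (s : Symbol G n) (s' : Symbol G n'),
      BC'mk G (n + n') (Ψ (P (Φ₁ (Finsupp.single s 1)) (Φ₂ (Finsupp.single s' 1)))) =
        if h : s.H = s'.H then
          BC'mk G (n + n')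
            (mkSC G (n + n') s.H (s.Y ⊓ s'.Y) (s.β + s'.β.map (castCh G h.symm)))
        else 0 := by

  intro s s'
  classical
  set TT : Subgroup G → SC G (n + n') := fun L =>
    if hL : L ≤ s.H ⊓ s'.H then
      mkSC G (n + n') L (s.Y ⊓ s'.Y)
        (s.β.map (resCh G (hL.trans inf_le_left)) + s'.β.map (resCh G (hL.trans inf_le_right)))
    else 0 with hTTdef
  have hvan : ∀ (L : Subgroup G) (hL : L ≤ s.H ⊓ s'.H),
      ((∃ b ∈ s.β, resCh G (hL.trans inf_le_left) b = 0) ∨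
       (∃ b ∈ s'.β, resCh G (hL.trans inf_le_right) b = 0)) → TT L = 0 := by
    intro L hL hex
    have h0 : (0 : Ch L) ∈ s.β.map (resCh G (hL.trans inf_le_left)) +
        s'.β.map (resCh G (hL.trans inf_le_right)) := by
      rcases hex with ⟨b, hb, hb0⟩ | ⟨b, hb, hb0⟩
      · exact Multiset.mem_add.mpr (Or.inl (Multiset.mem_map.mpr ⟨b, hb, hb0⟩))
      · exact Multiset.mem_add.mpr (Or.inr (Multiset.mem_map.mpr ⟨b, hb, hb0⟩))
    simp only [hTTdef]
    rw [dif_pos hL]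
    exact CBGAux.mkSC_eq_zero _ _ _ h0
  have key : ∀ K K' : Subgroup G, K ≤ s.H → K' ≤ s'.H →
      Ψ (P (resSC G n s K) (resSC G n' s' K')) =
        ∑ L ∈ Finset.univ.filter (fun L : Subgroup G => L ≤ K ⊓ K'), TT L := by
    intro K K' hK hK'
    have hKK' : K ⊓ K' ≤ s.H ⊓ s'.H := inf_le_inf hK hK'
    by_cases hg1 : ∃ b ∈ s.β, resCh G hK b = 0
    · obtain ⟨b, hb, hb0⟩ := hg1
      have hz : resSC G n s K = 0 := by
        rw [resSC, dif_pos hK]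
        exact CBGAux.mkSC_eq_zero _ _ _ (Multiset.mem_map.mpr ⟨b, hb, hb0⟩)
      rw [hz]
      simp only [map_zero, LinearMap.zero_apply]
      symm
      refine Finset.sum_eq_zero fun L hL => ?_
      have hL' : L ≤ K ⊓ K' := (Finset.mem_filter.mp hL).2
      refine hvan L (hL'.trans hKK') (Or.inl ⟨b, hb, ?_⟩)
      rw [← CBGAux.resCh_resCh hK (hL'.trans inf_le_left) b, hb0, CBGAux.resCh_zero]
    · by_cases hg2 : ∃ b ∈ s'.β, resCh G hK' b = 0
      · obtain ⟨b, hb, hb0⟩ := hg2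
        have hz : resSC G n' s' K' = 0 := by
          rw [resSC, dif_pos hK']
          exact CBGAux.mkSC_eq_zero _ _ _ (Multiset.mem_map.mpr ⟨b, hb, hb0⟩)
        rw [hz]
        simp only [map_zero]
        symm
        refine Finset.sum_eq_zero fun L hL => ?_
        have hL' : L ≤ K ⊓ K' := (Finset.mem_filter.mp hL).2
        refine hvan L (hL'.trans hKK') (Or.inr ⟨b, hb, ?_⟩)
        rw [← CBGAux.resCh_resCh hK' (hL'.trans inf_le_right) b, hb0, CBGAux.resCh_zero]
      · push_neg at hg1 hg2
        rw [resSC, dif_pos hK, resSC, dif_pos hK',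
          CBGAux.mkSC_eq_single K s.Y _ (hK.trans s.hHY)
            (by rw [Multiset.card_map]; exact s.hcard₁)
            (by rw [Multiset.card_map]; exact s.hcard₂)
            (fun b hb => by
              obtain ⟨a, ha, rfl⟩ := Multiset.mem_map.mp hb
              exact hg1 a ha)
            (CBGAux.gens_map hK s.hgen),
          CBGAux.mkSC_eq_single K' s'.Y _ (hK'.trans s'.hHY)
            (by rw [Multiset.card_map]; exact s'.hcard₁)
            (by rw [Multiset.card_map]; exact s'.hcard₂)
            (fun b hb => by
              obtain ⟨a, ha, rfl⟩ := Multiset.mem_map.mp hb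
              exact hg2 a ha)
            (CBGAux.gens_map hK' s'.hgen),
          hP]
        dsimp only
        rw [Multiset.map_map, Multiset.map_map, CBGAux.resCh_comp, CBGAux.resCh_comp]
        by_cases h0 : (0 : Ch ↥(K ⊓ K')) ∈
            s.β.map (resCh G (inf_le_left.trans hK)) +
            s'.β.map (resCh G (inf_le_right.trans hK'))
        · rw [CBGAux.mkSC_eq_zero _ _ _ h0, map_zero]
          symm
          refine Finset.sum_eq_zero fun L hL => ?_
          have hL' : L ≤ K ⊓ K' := (Finset.mem_filter.mp hL).2
          rcases Multiset.mem_add.mp h0 with hm | hm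
          · obtain ⟨b, hb, hb0⟩ := Multiset.mem_map.mp hm
            refine hvan L (hL'.trans hKK') (Or.inl ⟨b, hb, ?_⟩)
            rw [← CBGAux.resCh_resCh (inf_le_left.trans hK) hL' b, hb0, CBGAux.resCh_zero]
          · obtain ⟨b, hb, hb0⟩ := Multiset.mem_map.mp hm
            refine hvan L (hL'.trans hKK') (Or.inr ⟨b, hb, ?_⟩)
            rw [← CBGAux.resCh_resCh (inf_le_right.trans hK') hL' b, hb0, CBGAux.resCh_zero]
        · rw [CBGAux.mkSC_eq_single (K ⊓ K') (s.Y ⊓ s'.Y) _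
              (inf_le_inf (hK.trans s.hHY) (hK'.trans s'.hHY))
              (by
                rw [Multiset.card_add, Multiset.card_map, Multiset.card_map]
                have h := s.hcard₁
                omega)
              (by
                rw [Multiset.card_add, Multiset.card_map, Multiset.card_map]
                have h1 := s.hcard₂
                have h2 := s'.hcard₂
                omega)
              (fun b hb => by
                rintro rfl
                exact h0 hb)
              (CBGAux.gens_add_left (CBGAux.gens_map _ s.hgen)),
            hΨ]
          dsimp only
          refine Finset.sum_congr rfl fun L hL => ?_
          have hL' : L ≤ K ⊓ K' := (Finset.mem_filter.mp hL).2
          rw [resSC, dif_pos hL']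
          dsimp only
          rw [Multiset.map_add, Multiset.map_map, Multiset.map_map,
            CBGAux.resCh_comp, CBGAux.resCh_comp]
          simp only [hTTdef]
          rw [dif_pos (hL'.trans hKK')]
  have hsum1 : ∀ L : Subgroup G,
      (∑ K ∈ Finset.univ.filter (fun K : Subgroup G => K ≤ s.H),
        if L ≤ K then μ K s.H else 0) = if L = s.H then 1 else 0 := by
    intro L
    rw [← Finset.sum_filter, Finset.filter_filter]
    exact CBGAux.moebius_colsum μ hμ_self hμ_not_le hμ_rec L s.H
  have hsum2 : ∀ L : Subgroup G,
      (∑ K ∈ Finset.univ.filter (fun K : Subgroup G => K ≤ s'.H),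
        if L ≤ K then μ K s'.H else 0) = if L = s'.H then 1 else 0 := by
    intro L
    rw [← Finset.sum_filter, Finset.filter_filter]
    exact CBGAux.moebius_colsum μ hμ_self hμ_not_le hμ_rec L s'.H
  have main : (∑ K' ∈ Finset.univ.filter (fun K' : Subgroup G => K' ≤ s'.H),
      ∑ K ∈ Finset.univ.filter (fun K : Subgroup G => K ≤ s.H),
        μ K' s'.H • μ K s.H • Ψ (P (resSC G n s K) (resSC G n' s' K'))) =
      (if h : s.H = s'.H then
        mkSC G (n + n') s.H (s.Y ⊓ s'.Y) (s.β + s'.β.map (castCh G h.symm))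
      else 0) := by
    calc
      (∑ K' ∈ Finset.univ.filter (fun K' : Subgroup G => K' ≤ s'.H),
        ∑ K ∈ Finset.univ.filter (fun K : Subgroup G => K ≤ s.H),
          μ K' s'.H • μ K s.H • Ψ (P (resSC G n s K) (resSC G n' s' K')))
        = ∑ K' ∈ Finset.univ.filter (fun K' : Subgroup G => K' ≤ s'.H),
            ∑ K ∈ Finset.univ.filter (fun K : Subgroup G => K ≤ s.H),
              ∑ L ∈ Finset.univ,
                (if L ≤ K' then μ K' s'.H else 0) •
                  (if L ≤ K then μ K s.H else 0) • TT L := by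
          refine Finset.sum_congr rfl fun K' hK' => Finset.sum_congr rfl fun K hK => ?_
          rw [key K K' (Finset.mem_filter.mp hK).2 (Finset.mem_filter.mp hK').2,
            Finset.smul_sum, Finset.smul_sum, Finset.sum_filter]
          refine Finset.sum_congr rfl fun L _ => ?_
          by_cases h1 : L ≤ K
          · by_cases h2 : L ≤ K'
            · simp [h1, h2, le_inf_iff]
            · simp [h1, h2, le_inf_iff]
          · simp [h1, le_inf_iff]
      _ = ∑ L ∈ Finset.univ,
            (∑ K' ∈ Finset.univ.filter (fun K' : Subgroup G => K' ≤ s'.H),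
              if L ≤ K' then μ K' s'.H else 0) •
            (∑ K ∈ Finset.univ.filter (fun K : Subgroup G => K ≤ s.H),
              if L ≤ K then μ K s.H else 0) • TT L := by
          refine (Finset.sum_congr rfl fun K' _ => Finset.sum_comm).trans ?_
          refine Finset.sum_comm.trans ?_
          refine Finset.sum_congr rfl fun L _ => ?_
          rw [Finset.sum_smul]
          refine Finset.sum_congr rfl fun K' _ => ?_
          rw [Finset.sum_smul, Finset.smul_sum]
      _ = ∑ L ∈ Finset.univ,
            (if L = s'.H then (1 : ℤ) else 0) • (if L = s.H then (1 : ℤ) else 0) • TT L := by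
          refine Finset.sum_congr rfl fun L _ => ?_
          rw [hsum1 L, hsum2 L]
      _ = (if h : s.H = s'.H then
            mkSC G (n + n') s.H (s.Y ⊓ s'.Y) (s.β + s'.β.map (castCh G h.symm))
          else 0) := by
          by_cases h : s.H = s'.H
          · rw [dif_pos h]
            have e : ∀ L ∈ Finset.univ,
                (if L = s'.H then (1 : ℤ) else 0) • (if L = s.H then (1 : ℤ) else 0) • TT L =
                  if L = s.H then TT L else 0 := by
              intro L _
              by_cases h1 : L = s.H
              · simp [h1, h]
              · simp [h1]
            rw [Finset.sum_congr rfl e, Finset.sum_ite_eq' Finset.univ s.H TT,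
              if_pos (Finset.mem_univ _)]
            simp only [hTTdef]
            rw [dif_pos (le_inf le_rfl (le_of_eq h))]
            congr 1
            refine congrArg₂ (· + ·) ?_ ?_
            · conv_rhs => rw [← Multiset.map_id s.β]
              exact Multiset.map_congr rfl fun b _ => CBGAux.resCh_self _ b
            · exact Multiset.map_congr rfl fun b _ => CBGAux.resCh_eq_castCh h.symm _ b
          · rw [dif_neg h]
            refine Finset.sum_eq_zero fun L _ => ?_
            by_cases h1 : L = s.H
            · have h2 : L ≠ s'.H := fun hc => h (h1.symm.trans hc)
              simp [h2]
            · simp [h1]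
  have expand : Ψ (P
      (∑ K ∈ Finset.univ.filter (fun K : Subgroup G => K ≤ s.H), μ K s.H • resSC G n s K)
      (∑ K' ∈ Finset.univ.filter (fun K' : Subgroup G => K' ≤ s'.H),
        μ K' s'.H • resSC G n' s' K')) =
      ∑ K' ∈ Finset.univ.filter (fun K' : Subgroup G => K' ≤ s'.H),
        ∑ K ∈ Finset.univ.filter (fun K : Subgroup G => K ≤ s.H),
          μ K' s'.H • μ K s.H • Ψ (P (resSC G n s K) (resSC G n' s' K')) := by
    simp only [map_sum, map_smul, LinearMap.sum_apply, LinearMap.smul_apply, Finset.smul_sum]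
  have main2 : Ψ (P (Φ₁ (Finsupp.single s 1)) (Φ₂ (Finsupp.single s' 1))) =
      (if h : s.H = s'.H then
        mkSC G (n + n') s.H (s.Y ⊓ s'.Y) (s.β + s'.β.map (castCh G h.symm))
      else 0) := by
    rw [hΦ₁ s, hΦ₂ s']
    exact expand.trans main
  rw [main2]
  by_cases h : s.H = s'.H
  · rw [dif_pos h, dif_pos h]
  · rw [dif_neg h, dif_neg h, map_zero]
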